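/- Let U be a Hopf algebra over a commutative ring k with antipode S, B the monad (−) ⊗_k U and D the comonad U ⊗_k (−) on k-Mod. The maps θ_X(u ⊗ x ⊗ v) = S(v_{(2)})u ⊗ x ⊗ v_{(1)} define a mixed distributive law θ : B ⟶ D. -/

import Mathlib

open TensorProduct Coalgebra HopfAlgebra

universe u

namespace BohmStefan

section FrozenDefs
variable (k : Type u) [CommRing k]
variable (U : Type u) [Ring U] [HopfAlgebra k U]

/-- The map `v ↦ S(v₍₂₎) ⊗ v₍₁₎`. -/
noncomputable def antipodeSwap : U →ₗ[k] U ⊗[k] U :=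
  (TensorProduct.comm k U U).toLinearMap ∘ₗ
    (TensorProduct.map LinearMap.id (HopfAlgebra.antipode (R := k))) ∘ₗ
      Coalgebra.comul

/-- The mixed distributive law `θ_X : (U ⊗ X) ⊗ U ⟶ U ⊗ (X ⊗ U)`,
`u ⊗ x ⊗ v ↦ S(v₍₂₎)u ⊗ x ⊗ v₍₁₎`. -/
noncomputable def thetaMap (X : Type u) [AddCommGroup X] [Module k X] :
    (U ⊗[k] X) ⊗[k] U →ₗ[k] U ⊗[k] (X ⊗[k] U) :=
  (TensorProduct.map
      ((LinearMap.mul' k U) ∘ₗ (TensorProduct.comm k U U).toLinearMap) LinearMap.id) ∘ₗ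
    (tensorTensorTensorComm k U X U U).toLinearMap ∘ₗ
      (TensorProduct.map LinearMap.id (antipodeSwap k U))

/-- The multiplication `μ_P : (P ⊗ U) ⊗ U ⟶ P ⊗ U` of the monad `B = (−) ⊗ U`. -/
noncomputable def muMap (P : Type u) [AddCommGroup P] [Module k P] :
    (P ⊗[k] U) ⊗[k] U →ₗ[k] P ⊗[k] U :=
  (TensorProduct.map LinearMap.id (LinearMap.mul' k U)) ∘ₗ
    (TensorProduct.assoc k P U U).toLinearMap

/-- The unit `η_P : P ⟶ P ⊗ U`, `p ↦ p ⊗ 1`, of the monad `B = (−) ⊗ U`. -/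
noncomputable def etaMap (P : Type u) [AddCommGroup P] [Module k P] :
    P →ₗ[k] P ⊗[k] U :=
  (TensorProduct.mk k P U).flip 1

/-- The comultiplication `Δ_P : U ⊗ P ⟶ U ⊗ (U ⊗ P)` of the comonad `D = U ⊗ (−)`. -/
noncomputable def deltaMap (P : Type u) [AddCommGroup P] [Module k P] :
    U ⊗[k] P →ₗ[k] U ⊗[k] (U ⊗[k] P) :=
  (TensorProduct.assoc k U U P).toLinearMap ∘ₗ
    (TensorProduct.map Coalgebra.comul LinearMap.id)

/-- The counit `ε_P : U ⊗ P ⟶ P` of the comonad `D = U ⊗ (−)`. -/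
noncomputable def epsMap (P : Type u) [AddCommGroup P] [Module k P] :
    U ⊗[k] P →ₗ[k] P :=
  (TensorProduct.lid k P).toLinearMap ∘ₗ
    (TensorProduct.map (Coalgebra.counit (R := k)) LinearMap.id)

end FrozenDefs


variable {k : Type u} [CommRing k]

section Conv

variable {C A : Type u} [AddCommGroup C] [Module k C] [Coalgebra k C]
  [Ring A] [Algebra k A]

/-- Convolution product on `Hom(C, A)`. -/
noncomputable def conv (f g : C →ₗ[k] A) : C →ₗ[k] A :=
  LinearMap.mul' k A ∘ₗ TensorProduct.map f g ∘ₗ Coalgebra.comul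

lemma conv_apply_repr (f g : C →ₗ[k] A) {c : C} {ι : Type*} (r : Repr k c ι) :
    conv f g c = ∑ i ∈ r.index, f (r.left i) * g (r.right i) := by
  simp only [conv, LinearMap.comp_apply, ← r.eq, map_sum, TensorProduct.map_tmul,
    LinearMap.mul'_apply]

/-- The unit for convolution. -/
noncomputable def convUnit : C →ₗ[k] A := Algebra.linearMap k A ∘ₗ Coalgebra.counit

lemma convUnit_apply (c : C) : convUnit (k := k) (A := A) c = algebraMap k A (counit c) := rfl

lemma sum_smul_counit_right (c : C) {ι : Type*} (r : Repr k c ι) :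
    ∑ i ∈ r.index, counit (R := k) (r.right i) • r.left i = c := by
  have := congrArg (TensorProduct.rid k C) (sum_tmul_counit_eq r)
  simp only [map_sum, TensorProduct.rid_tmul, one_smul] at this
  exact this

lemma sum_smul_counit_left (c : C) {ι : Type*} (r : Repr k c ι) :
    ∑ i ∈ r.index, counit (R := k) (r.left i) • r.right i = c := by
  have := congrArg (TensorProduct.lid k C) (sum_counit_tmul_eq r)
  simp only [map_sum, TensorProduct.lid_tmul, one_smul] at this
  exact this

lemma conv_convUnit (f : C →ₗ[k] A) : conv f convUnit = f := by
  ext c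
  rw [conv_apply_repr f convUnit (ℛ k c)]
  calc ∑ i ∈ (ℛ k c).index, f ((ℛ k c).left i) * convUnit ((ℛ k c).right i)
      = ∑ i ∈ (ℛ k c).index, f (counit (R := k) ((ℛ k c).right i) • (ℛ k c).left i) := by
        refine Finset.sum_congr rfl fun i _ => ?_
        rw [convUnit_apply, Algebra.algebraMap_eq_smul_one, map_smul, mul_smul_comm, mul_one]
    _ = f c := by rw [← map_sum, sum_smul_counit_right c (ℛ k c)]

lemma convUnit_conv (f : C →ₗ[k] A) : conv convUnit f = f := by
  ext c
  rw [conv_apply_repr convUnit f (ℛ k c)]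
  calc ∑ i ∈ (ℛ k c).index, convUnit ((ℛ k c).left i) * f ((ℛ k c).right i)
      = ∑ i ∈ (ℛ k c).index, f (counit (R := k) ((ℛ k c).left i) • (ℛ k c).right i) := by
        refine Finset.sum_congr rfl fun i _ => ?_
        rw [convUnit_apply, Algebra.algebraMap_eq_smul_one, map_smul, smul_mul_assoc, one_mul]
    _ = f c := by rw [← map_sum, sum_smul_counit_left c (ℛ k c)]

lemma conv_assoc (f g h : C →ₗ[k] A) : conv (conv f g) h = conv f (conv g h) := by
  ext c
  set r := ℛ k c with hr
  set a₁ : (i : r.ι) → Repr k (r.left i) (C × C) := fun i => ℛ k (r.left i) with ha₁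
  set a₂ : (i : r.ι) → Repr k (r.right i) (C × C) := fun i => ℛ k (r.right i) with ha₂
  have key := sum_tmul_tmul_eq r a₁ a₂
  have key2 := congrArg (LinearMap.mul' k A ∘ₗ
    TensorProduct.map f (LinearMap.mul' k A ∘ₗ TensorProduct.map g h)) key
  simp only [map_sum, LinearMap.comp_apply, TensorProduct.map_tmul,
    LinearMap.mul'_apply] at key2
  rw [conv_apply_repr (conv f g) h r, conv_apply_repr f (conv g h) r]
  calc ∑ i ∈ r.index, conv f g (r.left i) * h (r.right i)
      = ∑ i ∈ r.index, ∑ j ∈ (a₁ i).index,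
          f ((a₁ i).left j) * ((g ((a₁ i).right j)) * h (r.right i)) := by
        refine Finset.sum_congr rfl fun i _ => ?_
        rw [conv_apply_repr f g (a₁ i), Finset.sum_mul]
        exact Finset.sum_congr rfl fun j _ => mul_assoc _ _ _
    _ = ∑ i ∈ r.index, ∑ j ∈ (a₂ i).index,
          f (r.left i) * (g ((a₂ i).left j) * h ((a₂ i).right j)) := key2
    _ = ∑ i ∈ r.index, f (r.left i) * conv g h (r.right i) := by
        refine Finset.sum_congr rfl fun i _ => ?_
        rw [conv_apply_repr g h (a₂ i), Finset.mul_sum]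

lemma conv_inv_unique {f g m : C →ₗ[k] A} (h1 : conv f m = convUnit)
    (h2 : conv m g = convUnit) : f = g := by
  calc f = conv f convUnit := (conv_convUnit f).symm
    _ = conv f (conv m g) := by rw [h2]
    _ = conv (conv f m) g := (conv_assoc f m g).symm
    _ = conv convUnit g := by rw [h1]
    _ = g := convUnit_conv g

end Conv


variable {k : Type u} [CommRing k]

section Reprs
variable {U : Type u} [Ring U] [Bialgebra k U]

/-- A canonical representation of `comul 1`. -/
noncomputable def oneRepr : Repr k (1 : U) ℕ where
  index := ({0} : Finset ℕ)
  left := fun _ => 1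
  right := fun _ => 1
  eq := by simp [Algebra.TensorProduct.one_def]

@[simp] lemma oneRepr_index : (oneRepr (k := k) (U := U)).index = ({0} : Finset ℕ) := rfl
@[simp] lemma oneRepr_left (i : ℕ) : (oneRepr (k := k) (U := U)).left i = 1 := rfl
@[simp] lemma oneRepr_right (i : ℕ) : (oneRepr (k := k) (U := U)).right i = 1 := rfl

/-- A representation of `comul (a * b)` built from representations of `a` and `b`. -/
noncomputable def mulRepr {a b : U} {ι κ : Type*} (ra : Repr k a ι) (rb : Repr k b κ) :
    Repr k (a * b) (ι × κ) where
  index := ra.index ×ˢ rb.index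
  left := fun p => ra.left p.1 * rb.left p.2
  right := fun p => ra.right p.1 * rb.right p.2
  eq := by
    show _ = Coalgebra.comul (R := k) (a * b)
    rw [Bialgebra.comul_mul, ← ra.eq, ← rb.eq, Finset.sum_mul_sum]
    rw [Finset.sum_product]
    exact Finset.sum_congr rfl fun i _ => Finset.sum_congr rfl fun j _ =>
      (Algebra.TensorProduct.tmul_mul_tmul _ _ _ _).symm

@[simp] lemma mulRepr_index {a b : U} {ι κ : Type*} (ra : Repr k a ι) (rb : Repr k b κ) :
    (mulRepr ra rb).index = ra.index ×ˢ rb.index := rfl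
@[simp] lemma mulRepr_left {a b : U} {ι κ : Type*} (ra : Repr k a ι) (rb : Repr k b κ) (p) :
    (mulRepr ra rb).left p = ra.left p.1 * rb.left p.2 := rfl
@[simp] lemma mulRepr_right {a b : U} {ι κ : Type*} (ra : Repr k a ι) (rb : Repr k b κ) (p) :
    (mulRepr ra rb).right p = ra.right p.1 * rb.right p.2 := rfl

end Reprs

section TmulRepr
variable {A B : Type u} [AddCommGroup A] [AddCommGroup B] [Module k A] [Module k B]
  [Coalgebra k A] [Coalgebra k B]

/-- A representation of `comul (a ⊗ₜ b)` in the tensor product coalgebra. -/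
noncomputable def tmulRepr {a : A} {b : B} {ι κ : Type*} (ra : Repr k a ι) (rb : Repr k b κ) :
    Repr k (a ⊗ₜ[k] b) (ι × κ) where
  index := ra.index ×ˢ rb.index
  left := fun p => ra.left p.1 ⊗ₜ[k] rb.left p.2
  right := fun p => ra.right p.1 ⊗ₜ[k] rb.right p.2
  eq := by
    have : CoalgebraStruct.comul (R := k) (a ⊗ₜ[k] b) =
        TensorProduct.tensorTensorTensorComm k A A B B
          (CoalgebraStruct.comul (R := k) a ⊗ₜ CoalgebraStruct.comul (R := k) b) := by
      simp [TensorProduct.comul_def, AlgebraTensorModule.tensorTensorTensorComm_eq]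
    rw [this, ← ra.eq, ← rb.eq, Finset.sum_product]
    simp only [TensorProduct.sum_tmul, TensorProduct.tmul_sum, map_sum,
      TensorProduct.tensorTensorTensorComm_tmul, Finset.sum_product]
    rw [Finset.sum_comm]

end TmulRepr

section Hopf
open Bialgebra
variable {U : Type u} [Ring U] [HopfAlgebra k U]

local notation "S" => HopfAlgebra.antipode (R := k) (A := U)

lemma antipode_one : S (1 : U) = 1 := by
  have := sum_antipode_mul_eq_algebraMap_counit (R := k) (oneRepr (U := U))
  simpa using this

lemma antipode_mul_rev (a b : U) : S (a * b) = S b * S a := by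
  have h1 : conv (S ∘ₗ LinearMap.mul' k U) (LinearMap.mul' k U)
      = convUnit (k := k) (C := U ⊗[k] U) (A := U) := by
    apply TensorProduct.ext'
    intro a b
    rw [conv_apply_repr _ _ (tmulRepr (ℛ k a) (ℛ k b))]
    have : ∑ p ∈ (tmulRepr (ℛ k a) (ℛ k b)).index,
        (S ∘ₗ LinearMap.mul' k U) ((tmulRepr (ℛ k a) (ℛ k b)).left p) *
          (LinearMap.mul' k U) ((tmulRepr (ℛ k a) (ℛ k b)).right p)
        = ∑ p ∈ (mulRepr (ℛ k a) (ℛ k b)).index,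
            S ((mulRepr (ℛ k a) (ℛ k b)).left p) * (mulRepr (ℛ k a) (ℛ k b)).right p := by
      refine Finset.sum_congr rfl fun p _ => ?_
      simp [tmulRepr, mulRepr]
    rw [this, sum_antipode_mul_eq_algebraMap_counit (mulRepr (ℛ k a) (ℛ k b))]
    simp [convUnit_apply, CoalgebraStruct.counit]
    exact Algebra.commutes _ _
  have h2 : conv (LinearMap.mul' k U)
      (LinearMap.mul' k U ∘ₗ TensorProduct.map S S ∘ₗ (TensorProduct.comm k U U).toLinearMap)
      = convUnit (k := k) (C := U ⊗[k] U) (A := U) := by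
    apply TensorProduct.ext'
    intro a b
    set ra := ℛ k a; set rb := ℛ k b
    rw [conv_apply_repr _ _ (tmulRepr ra rb)]
    have : ∑ p ∈ (tmulRepr ra rb).index,
        (LinearMap.mul' k U) ((tmulRepr ra rb).left p) *
          (LinearMap.mul' k U ∘ₗ TensorProduct.map S S ∘ₗ
            (TensorProduct.comm k U U).toLinearMap) ((tmulRepr ra rb).right p)
        = ∑ i ∈ ra.index, ∑ j ∈ rb.index,
            ra.left i * ((rb.left j * S (rb.right j)) * S (ra.right i)) := by
      rw [tmulRepr, Finset.sum_product]
      refine Finset.sum_congr rfl fun i _ => Finset.sum_congr rfl fun j _ => ?_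
      simp only [LinearMap.comp_apply, LinearMap.mul'_apply, TensorProduct.comm_tmul,
        TensorProduct.map_tmul]
      simp [mul_assoc]
    rw [this]
    have inner : ∀ i ∈ ra.index, ∑ j ∈ rb.index,
        ra.left i * ((rb.left j * S (rb.right j)) * S (ra.right i))
        = algebraMap k U (counit b) * (ra.left i * S (ra.right i)) := by
      intro i _
      rw [← Finset.mul_sum, ← Finset.sum_mul, sum_mul_antipode_eq_algebraMap_counit rb,
        ← mul_assoc, ← Algebra.commutes, mul_assoc]
    rw [Finset.sum_congr rfl inner, ← Finset.mul_sum, sum_mul_antipode_eq_algebraMap_counit ra]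
    simp only [convUnit_apply, TensorProduct.counit_tmul, smul_eq_mul, LinearMap.comp_apply,
      TensorProduct.map_tmul, LinearMap.mul'_apply, ← map_mul]
  have := conv_inv_unique h1 h2
  have := congrArg (fun f : U ⊗[k] U →ₗ[k] U => f (a ⊗ₜ[k] b)) this
  simpa using this

lemma counit_antipode (a : U) : counit (R := k) (S a) = counit (R := k) a := by
  set r := ℛ k a
  calc counit (R := k) (S a)
      = counit (R := k) (S (∑ i ∈ r.index, counit (R := k) (r.right i) • r.left i)) := by
        rw [sum_smul_counit_right a r]
    _ = ∑ i ∈ r.index, counit (R := k) (S (r.left i) * r.right i) := by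
        simp [map_sum, map_smul, smul_eq_mul, Bialgebra.counit_mul, mul_comm]
    _ = counit (R := k) (algebraMap k U (counit (R := k) a)) := by
        rw [← map_sum, sum_antipode_mul_eq_algebraMap_counit r]
    _ = counit (R := k) a := by simp

lemma aux_w (b : U) {ι : Type*} (rb : Repr k b ι) :
    ∑ j ∈ rb.index, (S (rb.left j) ⊗ₜ[k] (1 : U)) * comul (R := k) (rb.right j)
      = (1 : U) ⊗ₜ[k] b := by
  set a₁ : (j : rb.ι) → Repr k (rb.left j) (U × U) := fun j => ℛ k (rb.left j) with ha₁
  set a₂ : (j : rb.ι) → Repr k (rb.right j) (U × U) := fun j => ℛ k (rb.right j) with ha₂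
  have key := sum_tmul_tmul_eq rb a₁ a₂
  have key2 := congrArg (LinearMap.rTensor U (LinearMap.mul' k U ∘ₗ
      TensorProduct.map S LinearMap.id) ∘ₗ (TensorProduct.assoc k U U U).symm.toLinearMap) key
  simp only [map_sum, LinearMap.comp_apply, LinearEquiv.coe_coe, TensorProduct.assoc_symm_tmul,
    LinearMap.rTensor_tmul, LinearMap.comp_apply, LinearMap.mul'_apply,
    TensorProduct.map_tmul, LinearMap.id_coe, id_eq] at key2
  calc ∑ j ∈ rb.index, (S (rb.left j) ⊗ₜ[k] (1 : U)) * comul (R := k) (rb.right j)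
      = ∑ j ∈ rb.index, ∑ m ∈ (a₂ j).index,
          (S (rb.left j) * (a₂ j).left m) ⊗ₜ[k] (a₂ j).right m := by
        refine Finset.sum_congr rfl fun j _ => ?_
        rw [← (a₂ j).eq, Finset.mul_sum]
        exact Finset.sum_congr rfl fun m _ => by
          rw [Algebra.TensorProduct.tmul_mul_tmul, one_mul]
    _ = ∑ j ∈ rb.index, ∑ m ∈ (a₁ j).index,
          (S ((a₁ j).left m) * (a₁ j).right m) ⊗ₜ[k] rb.right j := key2.symm
    _ = ∑ j ∈ rb.index, counit (R := k) (rb.left j) • ((1 : U) ⊗ₜ[k] rb.right j) := by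
        refine Finset.sum_congr rfl fun j _ => ?_
        rw [← TensorProduct.sum_tmul, sum_antipode_mul_eq_algebraMap_counit (a₁ j),
          Algebra.algebraMap_eq_smul_one, ← TensorProduct.smul_tmul']
    _ = (1 : U) ⊗ₜ[k] b := by
        simp only [← TensorProduct.tmul_smul, ← TensorProduct.tmul_sum]
        rw [sum_smul_counit_left b rb]

lemma comul_antipode (a : U) :
    comul (R := k) (S a) =
      TensorProduct.map S S (TensorProduct.comm k U U (comul (R := k) a)) := by
  have h2 : conv (Coalgebra.comul (R := k) (A := U))
      (Coalgebra.comul (R := k) (A := U) ∘ₗ S) = convUnit := by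
    ext c
    set r := ℛ k c
    rw [conv_apply_repr _ _ r]
    calc ∑ i ∈ r.index, comul (R := k) (r.left i) *
          (Coalgebra.comul (R := k) (A := U) ∘ₗ S) (r.right i)
        = ∑ i ∈ r.index, comul (R := k) (r.left i * S (r.right i)) := by
          exact Finset.sum_congr rfl fun i _ => (Bialgebra.comul_mul _ _).symm
      _ = comul (R := k) (∑ i ∈ r.index, r.left i * S (r.right i)) := (map_sum _ _ _).symm
      _ = comul (R := k) (algebraMap k U (counit (R := k) c)) := by
          rw [sum_mul_antipode_eq_algebraMap_counit r]
      _ = convUnit c := by rw [Bialgebra.comul_algebraMap]; rfl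
  have h1 : conv (TensorProduct.map S S ∘ₗ (TensorProduct.comm k U U).toLinearMap ∘ₗ
      Coalgebra.comul (R := k) (A := U)) (Coalgebra.comul (R := k) (A := U)) = convUnit := by
    ext c
    set r := ℛ k c with hr
    set a₁ : (i : r.ι) → Repr k (r.left i) (U × U) := fun i => ℛ k (r.left i) with ha₁
    set a₂ : (i : r.ι) → Repr k (r.right i) (U × U) := fun i => ℛ k (r.right i) with ha₂
    have key := sum_tmul_tmul_eq r a₁ a₂
    have key2 := congrArg (LinearMap.mul' k (U ⊗[k] U) ∘ₗ
      TensorProduct.map ((TensorProduct.mk k U U 1) ∘ₗ S)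
        (LinearMap.mul' k (U ⊗[k] U) ∘ₗ
          TensorProduct.map (((TensorProduct.mk k U U).flip 1) ∘ₗ S)
            (Coalgebra.comul (R := k) (A := U)))) key
    simp only [map_sum, LinearMap.comp_apply, TensorProduct.map_tmul,
      LinearMap.mul'_apply, TensorProduct.mk_apply, LinearMap.flip_apply] at key2
    rw [conv_apply_repr _ _ r]
    calc ∑ i ∈ r.index, (TensorProduct.map S S ∘ₗ (TensorProduct.comm k U U).toLinearMap ∘ₗ
            Coalgebra.comul (R := k) (A := U)) (r.left i) *
          (Coalgebra.comul (R := k) (A := U)) (r.right i)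
        = ∑ i ∈ r.index, ∑ j ∈ (a₁ i).index,
            ((1 : U) ⊗ₜ[k] S ((a₁ i).left j)) *
              ((S ((a₁ i).right j) ⊗ₜ[k] (1 : U)) * comul (R := k) (r.right i)) := by
          refine Finset.sum_congr rfl fun i _ => ?_
          rw [LinearMap.comp_apply, LinearMap.comp_apply, LinearEquiv.coe_coe,
            show Coalgebra.comul (R := k) (r.left i) = ∑ j ∈ (a₁ i).index,
              (a₁ i).left j ⊗ₜ[k] (a₁ i).right j from ((a₁ i).eq).symm]
          rw [map_sum, map_sum, Finset.sum_mul]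
          refine Finset.sum_congr rfl fun j _ => ?_
          rw [TensorProduct.comm_tmul, TensorProduct.map_tmul, ← mul_assoc,
            Algebra.TensorProduct.tmul_mul_tmul, one_mul, mul_one]
      _ = ∑ i ∈ r.index, ∑ j ∈ (a₂ i).index,
            ((1 : U) ⊗ₜ[k] S (r.left i)) *
              ((S ((a₂ i).left j) ⊗ₜ[k] (1 : U)) * comul (R := k) ((a₂ i).right j)) := key2
      _ = ∑ i ∈ r.index, ((1 : U) ⊗ₜ[k] S (r.left i)) * ((1 : U) ⊗ₜ[k] r.right i) := by
          refine Finset.sum_congr rfl fun i _ => ?_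
          rw [← Finset.mul_sum, aux_w (r.right i) (a₂ i)]
      _ = (1 : U) ⊗ₜ[k] (∑ i ∈ r.index, S (r.left i) * r.right i) := by
          rw [TensorProduct.tmul_sum]
          exact Finset.sum_congr rfl fun i _ => by
            rw [Algebra.TensorProduct.tmul_mul_tmul, one_mul]
      _ = convUnit c := by
          rw [sum_antipode_mul_eq_algebraMap_counit r, convUnit_apply, Algebra.algebraMap_eq_smul_one,
            Algebra.algebraMap_eq_smul_one, Algebra.TensorProduct.one_def,
            TensorProduct.tmul_smul]
  have hGF := conv_inv_unique h1 h2
  have := congrArg (fun f : U →ₗ[k] U ⊗[k] U => f a) hGF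
  simpa using this.symm

end Hopf

section Main
variable (k : Type u) [CommRing k]
variable (U : Type u) [Ring U] [HopfAlgebra k U]

local notation "S" => HopfAlgebra.antipode (R := k) (A := U)

lemma thetaMap_tmul (X : Type u) [AddCommGroup X] [Module k X] (u : U) (x : X) (v : U)
    {ι : Type*} (r : Repr k v ι) :
    thetaMap k U X ((u ⊗ₜ[k] x) ⊗ₜ[k] v) =
      ∑ i ∈ r.index, (S (r.right i) * u) ⊗ₜ[k] (x ⊗ₜ[k] r.left i) := by
  rw [thetaMap, antipodeSwap]
  simp only [LinearMap.comp_apply, TensorProduct.map_tmul, LinearMap.id_coe, id_eq,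
    LinearEquiv.coe_coe]
  rw [show Coalgebra.comul (R := k) v = ∑ i ∈ r.index, r.left i ⊗ₜ[k] r.right i from r.eq.symm]
  simp only [map_sum, TensorProduct.map_tmul, TensorProduct.comm_tmul, LinearMap.id_coe, id_eq,
    TensorProduct.tmul_sum, TensorProduct.tensorTensorTensorComm_tmul, LinearMap.comp_apply,
    LinearEquiv.coe_coe, LinearMap.mul'_apply]

set_option maxHeartbeats 2000000 in
/-- for a Hopf algebra `U` over `k`, the maps
`θ_X(u ⊗ x ⊗ v) = S(v₍₂₎)u ⊗ x ⊗ v₍₁₎` form a mixed distributive law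
`θ : B ⟶ D` from the monad `B = (−) ⊗ U` to the comonad `D = U ⊗ (−)` on `k`-Mod. -/
theorem theta_isMixedDistLaw :
    -- naturality in `X`:
    (∀ (X Y : Type u) [AddCommGroup X] [Module k X] [AddCommGroup Y] [Module k Y]
        (f : X →ₗ[k] Y),
      thetaMap k U Y ∘ₗ
          (TensorProduct.map (TensorProduct.map LinearMap.id f) LinearMap.id) =
        (TensorProduct.map LinearMap.id (TensorProduct.map f LinearMap.id)) ∘ₗ
          thetaMap k U X) ∧
    -- compatibility with the multiplication of `B`:
    (∀ (X : Type u) [AddCommGroup X] [Module k X],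
      thetaMap k U X ∘ₗ muMap k U (U ⊗[k] X) =
        (TensorProduct.map LinearMap.id (muMap k U X)) ∘ₗ
          thetaMap k U (X ⊗[k] U) ∘ₗ
            (TensorProduct.map (thetaMap k U X) LinearMap.id)) ∧
    -- compatibility with the unit of `B`:
    (∀ (X : Type u) [AddCommGroup X] [Module k X],
      thetaMap k U X ∘ₗ etaMap k U (U ⊗[k] X) =
        TensorProduct.map LinearMap.id (etaMap k U X)) ∧
    -- compatibility with the comultiplication of `D`:
    (∀ (X : Type u) [AddCommGroup X] [Module k X],
      deltaMap k U (X ⊗[k] U) ∘ₗ thetaMap k U X =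
        (TensorProduct.map LinearMap.id (thetaMap k U X)) ∘ₗ
          thetaMap k U (U ⊗[k] X) ∘ₗ
            (TensorProduct.map (deltaMap k U X) LinearMap.id)) ∧
    -- compatibility with the counit of `D`:
    (∀ (X : Type u) [AddCommGroup X] [Module k X],
      epsMap k U (X ⊗[k] U) ∘ₗ thetaMap k U X =
        TensorProduct.map (epsMap k U X) LinearMap.id) := by
  refine ⟨?_, ?_, ?_, ?_, ?_⟩
  · -- naturality
    intro X Y _ _ _ _ f
    apply TensorProduct.ext'
    intro p v
    induction p using TensorProduct.induction_on with
    | zero => simp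
    | add p q hp hq => simp only [TensorProduct.add_tmul, map_add, hp, hq]
    | tmul u x =>
      set r := ℛ k v
      simp only [LinearMap.comp_apply, TensorProduct.map_tmul, LinearMap.id_coe, id_eq]
      rw [thetaMap_tmul k U Y u (f x) v r, thetaMap_tmul k U X u x v r, map_sum]
      exact Finset.sum_congr rfl fun i _ => by
        simp only [TensorProduct.map_tmul, LinearMap.id_coe, id_eq]
  · -- multiplication
    intro X _ _
    apply TensorProduct.ext'
    intro q w
    induction q using TensorProduct.induction_on with
    | zero => simp
    | add a b ha hb => simp only [TensorProduct.add_tmul, map_add, ha, hb]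
    | tmul p v =>
      induction p using TensorProduct.induction_on with
      | zero => simp
      | add a b ha hb => simp only [TensorProduct.add_tmul, map_add, ha, hb]
      | tmul u x =>
        set rv := ℛ k v with hrv
        set rw' := ℛ k w with hrw
        have hmu : muMap k U (U ⊗[k] X) (((u ⊗ₜ[k] x) ⊗ₜ[k] v) ⊗ₜ[k] w)
            = (u ⊗ₜ[k] x) ⊗ₜ[k] (v * w) := by
          simp [muMap]
        have hmuX : ∀ (a b : U), muMap k U X ((x ⊗ₜ[k] a) ⊗ₜ[k] b) = x ⊗ₜ[k] (a * b) := by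
          intro a b; simp [muMap]
        rw [LinearMap.comp_apply, hmu, thetaMap_tmul k U X u x (v * w) (mulRepr rv rw')]
        show (∑ p ∈ rv.index ×ˢ rw'.index,
            (S (rv.right p.1 * rw'.right p.2) * u) ⊗ₜ[k] (x ⊗ₜ[k] (rv.left p.1 * rw'.left p.2)))
          = _
        rw [Finset.sum_product]
        trans (∑ i ∈ rv.index, ∑ j ∈ rw'.index,
          (S (rw'.right j) * (S (rv.right i) * u)) ⊗ₜ[k] (x ⊗ₜ[k] (rv.left i * rw'.left j)))
        · exact Finset.sum_congr rfl fun i _ => Finset.sum_congr rfl fun j _ => by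
            rw [antipode_mul_rev, mul_assoc]
        · symm
          rw [LinearMap.comp_apply, LinearMap.comp_apply, TensorProduct.map_tmul,
            LinearMap.id_coe, id_eq, thetaMap_tmul k U X u x v rv,
            TensorProduct.sum_tmul, map_sum, map_sum]
          refine Finset.sum_congr rfl fun i _ => ?_
          rw [thetaMap_tmul k U (X ⊗[k] U) _ _ w rw', map_sum]
          refine Finset.sum_congr rfl fun j _ => ?_
          rw [TensorProduct.map_tmul, LinearMap.id_coe, id_eq, hmuX]
  · -- unit
    intro X _ _
    apply TensorProduct.ext'
    intro u x
    rw [LinearMap.comp_apply, TensorProduct.map_tmul, LinearMap.id_coe, id_eq]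
    rw [show etaMap k U (U ⊗[k] X) (u ⊗ₜ[k] x) = (u ⊗ₜ[k] x) ⊗ₜ[k] (1 : U) from rfl,
      show etaMap k U X x = x ⊗ₜ[k] (1 : U) from rfl,
      thetaMap_tmul k U X u x 1 oneRepr]
    simp [antipode_one]
  · -- comultiplication
    intro X _ _
    apply TensorProduct.ext'
    intro p v
    induction p using TensorProduct.induction_on with
    | zero => simp
    | add a b ha hb => simp only [TensorProduct.add_tmul, map_add, ha, hb]
    | tmul u x =>
      set ru := ℛ k u with hru
      set r := ℛ k v with hr
      set a₁ : (i : r.ι) → Repr k (r.left i) (U × U) := fun i => ℛ k (r.left i) with ha₁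
      set a₂ : (i : r.ι) → Repr k (r.right i) (U × U) := fun i => ℛ k (r.right i) with ha₂
      set Θ : U ⊗[k] (U ⊗[k] U) →ₗ[k] U ⊗[k] (U ⊗[k] (X ⊗[k] U)) :=
        (TensorProduct.assoc k U U (X ⊗[k] U)).toLinearMap ∘ₗ
          TensorProduct.map (LinearMap.mulRight k (Coalgebra.comul (R := k) u) ∘ₗ
            TensorProduct.map S S ∘ₗ (TensorProduct.comm k U U).toLinearMap)
            (TensorProduct.mk k X U x) ∘ₗ
          (TensorProduct.comm k U (U ⊗[k] U)).toLinearMap with hΘ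
      have hTheta : ∀ (v₁ v₂ v₃ : U), Θ (v₁ ⊗ₜ[k] (v₂ ⊗ₜ[k] v₃)) =
          ∑ m ∈ ru.index,
            (S v₃ * ru.left m) ⊗ₜ[k] ((S v₂ * ru.right m) ⊗ₜ[k] (x ⊗ₜ[k] v₁)) := by
        intro v₁ v₂ v₃
        rw [hΘ]
        simp only [LinearMap.comp_apply, LinearEquiv.coe_coe, TensorProduct.comm_tmul,
          TensorProduct.map_tmul, LinearMap.mulRight_apply, TensorProduct.mk_apply]
        rw [show Coalgebra.comul (R := k) u
          = ∑ m ∈ ru.index, ru.left m ⊗ₜ[k] ru.right m from ru.eq.symm, Finset.mul_sum]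
        simp only [Algebra.TensorProduct.tmul_mul_tmul, TensorProduct.sum_tmul, map_sum,
          TensorProduct.assoc_tmul]
      have key2 := congrArg Θ (sum_tmul_tmul_eq r a₁ a₂)
      simp only [map_sum, hTheta] at key2
      have hdelta : ∀ i ∈ r.index,
          deltaMap k U (X ⊗[k] U) ((S (r.right i) * u) ⊗ₜ[k] (x ⊗ₜ[k] r.left i))
          = ∑ j ∈ (a₂ i).index, ∑ m ∈ ru.index,
              (S ((a₂ i).right j) * ru.left m) ⊗ₜ[k]
                ((S ((a₂ i).left j) * ru.right m) ⊗ₜ[k] (x ⊗ₜ[k] r.left i)) := by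
        intro i _
        rw [deltaMap]
        simp only [LinearMap.comp_apply, LinearEquiv.coe_coe, TensorProduct.map_tmul,
          LinearMap.id_coe, id_eq]
        rw [Bialgebra.comul_mul, comul_antipode,
          show Coalgebra.comul (R := k) (r.right i) = ∑ j ∈ (a₂ i).index,
            (a₂ i).left j ⊗ₜ[k] (a₂ i).right j from ((a₂ i).eq).symm,
          show Coalgebra.comul (R := k) u
            = ∑ m ∈ ru.index, ru.left m ⊗ₜ[k] ru.right m from ru.eq.symm]
        simp only [map_sum, TensorProduct.comm_tmul, TensorProduct.map_tmul, Finset.sum_mul,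
          Finset.mul_sum, Algebra.TensorProduct.tmul_mul_tmul, TensorProduct.sum_tmul,
          TensorProduct.assoc_tmul]
        exact Finset.sum_comm
      have hdeltaX : deltaMap k U X (u ⊗ₜ[k] x)
          = ∑ m ∈ ru.index, ru.left m ⊗ₜ[k] (ru.right m ⊗ₜ[k] x) := by
        rw [deltaMap]
        simp only [LinearMap.comp_apply, LinearEquiv.coe_coe, TensorProduct.map_tmul,
          LinearMap.id_coe, id_eq]
        rw [show Coalgebra.comul (R := k) u
          = ∑ m ∈ ru.index, ru.left m ⊗ₜ[k] ru.right m from ru.eq.symm]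
        simp only [TensorProduct.sum_tmul, map_sum, TensorProduct.assoc_tmul]
      calc (deltaMap k U (X ⊗[k] U) ∘ₗ thetaMap k U X) ((u ⊗ₜ[k] x) ⊗ₜ[k] v)
          = ∑ i ∈ r.index, ∑ j ∈ (a₂ i).index, ∑ m ∈ ru.index,
              (S ((a₂ i).right j) * ru.left m) ⊗ₜ[k]
                ((S ((a₂ i).left j) * ru.right m) ⊗ₜ[k] (x ⊗ₜ[k] r.left i)) := by
            rw [LinearMap.comp_apply, thetaMap_tmul k U X u x v r, map_sum]
            exact Finset.sum_congr rfl hdelta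
        _ = ∑ i ∈ r.index, ∑ j ∈ (a₁ i).index, ∑ m ∈ ru.index,
              (S (r.right i) * ru.left m) ⊗ₜ[k]
                ((S ((a₁ i).right j) * ru.right m) ⊗ₜ[k] (x ⊗ₜ[k] (a₁ i).left j)) := key2.symm
        _ = ∑ m ∈ ru.index, ∑ i ∈ r.index, ∑ j ∈ (a₁ i).index,
              (S (r.right i) * ru.left m) ⊗ₜ[k]
                ((S ((a₁ i).right j) * ru.right m) ⊗ₜ[k] (x ⊗ₜ[k] (a₁ i).left j)) := by
            rw [show (∑ i ∈ r.index, ∑ j ∈ (a₁ i).index, ∑ m ∈ ru.index,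
                (S (r.right i) * ru.left m) ⊗ₜ[k]
                  ((S ((a₁ i).right j) * ru.right m) ⊗ₜ[k] (x ⊗ₜ[k] (a₁ i).left j)))
              = ∑ i ∈ r.index, ∑ m ∈ ru.index, ∑ j ∈ (a₁ i).index,
                (S (r.right i) * ru.left m) ⊗ₜ[k]
                  ((S ((a₁ i).right j) * ru.right m) ⊗ₜ[k] (x ⊗ₜ[k] (a₁ i).left j)) from
              Finset.sum_congr rfl fun i _ => Finset.sum_comm, Finset.sum_comm]
        _ = (TensorProduct.map LinearMap.id (thetaMap k U X) ∘ₗ thetaMap k U (U ⊗[k] X) ∘ₗ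
              TensorProduct.map (deltaMap k U X) LinearMap.id) ((u ⊗ₜ[k] x) ⊗ₜ[k] v) := by
            symm
            rw [LinearMap.comp_apply, LinearMap.comp_apply, TensorProduct.map_tmul,
              LinearMap.id_coe, id_eq, hdeltaX, TensorProduct.sum_tmul, map_sum, map_sum]
            refine Finset.sum_congr rfl fun m _ => ?_
            rw [thetaMap_tmul k U (U ⊗[k] X) (ru.left m) (ru.right m ⊗ₜ[k] x) v r, map_sum]
            refine Finset.sum_congr rfl fun i _ => ?_
            rw [TensorProduct.map_tmul, LinearMap.id_coe, id_eq,
              thetaMap_tmul k U X (ru.right m) x (r.left i) (a₁ i),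
              TensorProduct.tmul_sum]
  · -- counit
    intro X _ _
    apply TensorProduct.ext'
    intro p v
    induction p using TensorProduct.induction_on with
    | zero => simp
    | add p q hp hq => simp only [TensorProduct.add_tmul, map_add, hp, hq]
    | tmul u x =>
      set r := ℛ k v
      rw [LinearMap.comp_apply, thetaMap_tmul k U X u x v r, map_sum,
        TensorProduct.map_tmul, LinearMap.id_coe, id_eq]
      rw [show epsMap k U X (u ⊗ₜ[k] x) = counit (R := k) u • x from by
        simp [epsMap]]
      calc ∑ i ∈ r.index, epsMap k U (X ⊗[k] U) ((S (r.right i) * u) ⊗ₜ[k] (x ⊗ₜ[k] r.left i))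
          = ∑ i ∈ r.index, counit (R := k) u •
              (x ⊗ₜ[k] (counit (R := k) (r.right i) • r.left i)) := by
            refine Finset.sum_congr rfl fun i _ => ?_
            rw [show epsMap k U (X ⊗[k] U) ((S (r.right i) * u) ⊗ₜ[k] (x ⊗ₜ[k] r.left i))
              = counit (R := k) (S (r.right i) * u) • (x ⊗ₜ[k] r.left i) from by simp [epsMap]]
            rw [Bialgebra.counit_mul, counit_antipode, mul_comm, mul_smul,
              TensorProduct.tmul_smul]
        _ = counit (R := k) u • x ⊗ₜ[k] v := by
            rw [← Finset.smul_sum, ← TensorProduct.tmul_sum, sum_smul_counit_right v r,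
              TensorProduct.smul_tmul']

end Main

end BohmStefan
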